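/- For a 10-level complete binary tree with 512 leaves each colored blue or golden, the maximum M such that every coloring admits at least M color-preserving automorphisms is M = 2^128. -/

import Mathlib

/-- The vertices of a `k`-level complete binary tree: binary strings of
length `< k`.  The root is the empty string (level 1), and a vertex at
level `i` (a string of length `i - 1`) has children obtained by prepending a
bit; the leaves are the `2 ^ (k - 1)` strings of length `k - 1` (level `k`). -/
def TVert (k : ℕ) : Type := {l : List Bool // l.length < k}

/-- Adjacency in the tree: one vertex is a child of the other. -/
def TAdj (k : ℕ) (x y : TVert k) : Prop :=
  (∃ b : Bool, y.val = b :: x.val) ∨ (∃ b : Bool, x.val = b :: y.val)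

/-- The color-preserving automorphisms of the `k`-level complete binary tree
whose leaves are colored by `c` (colors are booleans): permutations of the
vertices preserving adjacency in both directions and the colors of leaves. -/
def ColorAuts (k : ℕ) (c : List Bool → Bool) : Set (Equiv.Perm (TVert k)) :=
  {f | (∀ x y : TVert k, TAdj k x y ↔ TAdj k (f x) (f y)) ∧
       ∀ x : TVert k, x.val.length = k - 1 → c ((f x).val) = c x.val}

namespace P19

/-- Apply swap bits along the path. -/
def F (s : List Bool → Bool) : List Bool → List Bool
  | [] => []
  | b :: x => (xor b (s x)) :: F s x

/-- Inverse of `F`. -/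
def G (s : List Bool → Bool) : List Bool → List Bool
  | [] => []
  | b :: x => (xor b (s (G s x))) :: G s x

@[simp] lemma F_nil (s) : F s [] = [] := rfl
@[simp] lemma F_cons (s b x) : F s (b :: x) = (xor b (s x)) :: F s x := rfl
@[simp] lemma G_nil (s) : G s [] = [] := rfl
@[simp] lemma G_cons (s b x) : G s (b :: x) = (xor b (s (G s x))) :: G s x := rfl

@[simp] lemma F_length (s l) : (F s l).length = l.length := by
  induction l with
  | nil => rfl
  | cons b x ih => simp [F, ih]

@[simp] lemma G_length (s l) : (G s l).length = l.length := by
  induction l with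
  | nil => rfl
  | cons b x ih => simp [G, ih]

@[simp] lemma F_G (s l) : F s (G s l) = l := by
  induction l with
  | nil => rfl
  | cons b x ih => simp [G, F, ih, Bool.xor_assoc]

@[simp] lemma G_F (s l) : G s (F s l) = l := by
  induction l with
  | nil => rfl
  | cons b x ih => simp [G, F, ih, Bool.xor_assoc]

lemma F_congr {s t : List Bool → Bool} (l : List Bool)
    (h : ∀ x : List Bool, x.length < l.length → s x = t x) : F s l = F t l := by
  induction l with
  | nil => rfl
  | cons b x ih =>
    simp only [F_cons]
    rw [h x (by simp), ih (fun y hy => h y (by simp; omega))]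

lemma F_comp (s t : List Bool → Bool) (l : List Bool) :
    F (fun x => xor (t x) (s (F t x))) l = F s (F t l) := by
  induction l with
  | nil => rfl
  | cons b x ih => simp [F, ih, Bool.xor_assoc]

lemma G_eq_F (s : List Bool → Bool) (l : List Bool) :
    G s l = F (fun x => s (G s x)) l := by
  induction l with
  | nil => rfl
  | cons b x ih => simp [G, F, ← ih]

@[simp] lemma F_id (l : List Bool) : F (fun _ => false) l = l := by
  induction l with
  | nil => rfl
  | cons b x ih => simp [F, ih]

lemma F_concat (s : List Bool → Bool) (l : List Bool) (b : Bool) :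
    F s (l ++ [b]) = F (fun x => s (x ++ [b])) l ++ [xor b (s [])] := by
  induction l with
  | nil => rfl
  | cons a m ih => simp [F, ih]

/-- Swap assignments for trees of depth `d`. -/
def SwapT (d : ℕ) : Type := {l : List Bool // l.length < d} → Bool

noncomputable instance (d : ℕ) : Finite {l : List Bool // l.length < d} :=
  (List.finite_length_lt Bool d).to_subtype

noncomputable instance (d : ℕ) : Finite (SwapT d) := by
  unfold SwapT; infer_instance

def ext {d : ℕ} (s : SwapT d) : List Bool → Bool :=
  fun l => if h : l.length < d then s ⟨l, h⟩ else false

lemma ext_eq {d : ℕ} (s : SwapT d) (l : List Bool) (h : l.length < d) :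
    ext s l = s ⟨l, h⟩ := dif_pos h

/-- Colored isomorphisms from `c` to `c'` on the depth-`d` tree. -/
def IsoS (d : ℕ) (c c' : List Bool → Bool) : Type :=
  {s : SwapT d // ∀ l : List Bool, l.length = d → c' (F (ext s) l) = c l}

noncomputable instance (d c c') : Finite (IsoS d c c') := by
  unfold IsoS; infer_instance

/-- Number of color-preserving automorphisms. -/
noncomputable def A (d : ℕ) (c : List Bool → Bool) : ℕ := Nat.card (IsoS d c c)

noncomputable def Bn (d : ℕ) (c c' : List Bool → Bool) : ℕ := Nat.card (IsoS d c c')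

end P19

namespace P19

variable {d : ℕ}

/-- Composition of restricted swaps. -/
def scomp {d : ℕ} (s t : SwapT d) : SwapT d :=
  fun x => xor (ext t x.val) (ext s (F (ext t) x.val))

/-- Inverse of restricted swap. -/
def sinv {d : ℕ} (s : SwapT d) : SwapT d :=
  fun x => ext s (G (ext s) x.val)

lemma F_ext_scomp (s t : SwapT d) (l : List Bool) (hl : l.length ≤ d) :
    F (ext (scomp s t)) l = F (ext s) (F (ext t) l) := by
  rw [← F_comp]
  apply F_congr
  intro x hx
  have hxd : x.length < d := lt_of_lt_of_le hx hl
  rw [ext_eq _ _ hxd]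
  rfl

lemma F_ext_sinv (s : SwapT d) (l : List Bool) (hl : l.length ≤ d) :
    F (ext (sinv s)) l = G (ext s) l := by
  rw [G_eq_F]
  apply F_congr
  intro x hx
  have hxd : x.length < d := lt_of_lt_of_le hx hl
  rw [ext_eq _ _ hxd]
  rfl

/-- Swaps are determined by the action of `F` on lists of length ≤ d. -/
lemma swap_ext_of_F {s t : SwapT d}
    (h : ∀ l : List Bool, l.length ≤ d → F (ext s) l = F (ext t) l) : s = t := by
  funext x
  obtain ⟨xv, hx⟩ := x
  have := h (false :: xv) (by simp; omega)
  simp only [F_cons, List.cons.injEq] at this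
  have h2 := this.1
  rwa [ext_eq s _ hx, ext_eq t _ hx, Bool.false_xor, Bool.false_xor] at h2

lemma scomp_sinv_cancel (s t : SwapT d) : scomp s (scomp (sinv s) t) = t := by
  apply swap_ext_of_F
  intro l hl
  rw [F_ext_scomp _ _ _ hl, F_ext_scomp _ _ _ hl, F_ext_sinv _ _ (by simpa using hl), F_G]

lemma sinv_scomp_cancel (s t : SwapT d) : scomp (sinv s) (scomp s t) = t := by
  apply swap_ext_of_F
  intro l hl
  rw [F_ext_scomp _ _ _ hl, F_ext_scomp _ _ _ hl, F_ext_sinv _ _ (by simpa using hl), G_F]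

lemma iso_symm {c c' : List Bool → Bool} (t : IsoS d c c') : Nonempty (IsoS d c' c) := by
  refine ⟨⟨sinv t.1, ?_⟩⟩
  intro l hl
  rw [F_ext_sinv _ _ (le_of_eq hl)]
  have := t.2 (G (ext t.1) l) (by simpa using hl)
  rw [F_G] at this
  exact this.symm

lemma iso_refl (c : List Bool → Bool) : Nonempty (IsoS d c c) := by
  refine ⟨⟨fun _ => false, ?_⟩⟩
  intro l _
  have : F (ext (fun _ => false : SwapT d)) l = l := by
    rw [F_congr l (t := fun _ => false), F_id]
    intro x _
    simp [ext]
  rw [this]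

/-- If an isomorphism `c → c'` exists then `Bn d c c' = A d c`. -/
lemma Bn_eq_A {c c' : List Bool → Bool} (t : IsoS d c c') : Bn d c c' = A d c := by
  refine (Nat.card_congr ?_).symm
  refine Equiv.ofBijective (fun a => ⟨scomp t.1 a.1, ?_⟩) ⟨?_, ?_⟩
  · intro l hl
    rw [F_ext_scomp _ _ _ (le_of_eq hl), t.2 _ (by simpa using hl), a.2 _ hl]
  · intro a a' h
    apply Subtype.ext
    have := congrArg Subtype.val h
    simp only at this
    have h2 : scomp (sinv t.1) (scomp t.1 a.1) = scomp (sinv t.1) (scomp t.1 a'.1) := by rw [this]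
    rwa [sinv_scomp_cancel, sinv_scomp_cancel] at h2
  · intro f
    refine ⟨⟨scomp (sinv t.1) f.1, ?_⟩, ?_⟩
    · intro l hl
      rw [F_ext_scomp _ _ _ (le_of_eq hl), F_ext_sinv _ _ (by simp [hl])]
      have h1 := f.2 l hl
      have h2 := t.2 (G (ext t.1) (F (ext f.1) l)) (by simp [hl])
      rw [F_G] at h2
      rw [← h2, h1]
    · apply Subtype.ext
      exact scomp_sinv_cancel t.1 f.1

lemma Bn_eq_zero {c c' : List Bool → Bool} (h : ¬ Nonempty (IsoS d c c')) :
    Bn d c c' = 0 := by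
  have : IsEmpty (IsoS d c c') := not_nonempty_iff.mp h
  exact Nat.card_of_isEmpty

end P19

namespace P19

variable {d : ℕ}

def cb (c : List Bool → Bool) (b : Bool) : List Bool → Bool := fun l => c (l ++ [b])

def rho (s : SwapT (d+1)) : Bool := s ⟨[], Nat.succ_pos d⟩

def sub (s : SwapT (d+1)) (b : Bool) : SwapT d :=
  fun x => s ⟨x.val ++ [b], by simpa using x.2⟩

def recon (ρ : Bool) (t0 t1 : SwapT d) : SwapT (d+1) :=
  fun x => if hx : x.val = [] then ρ else
    (bif x.val.getLast hx then t1 else t0)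
      ⟨x.val.dropLast, by
        have h1 : x.val.length < d + 1 := x.2
        have h2 : x.val.length ≠ 0 := by simpa using hx
        simpa using by omega⟩

@[simp] lemma rho_recon (ρ : Bool) (t0 t1 : SwapT d) : rho (recon ρ t0 t1) = ρ := rfl

lemma sub_recon (ρ : Bool) (t0 t1 : SwapT d) (b : Bool) :
    sub (recon ρ t0 t1) b = bif b then t1 else t0 := by
  funext x
  simp only [sub, recon]
  rw [dif_neg (by simp)]
  simp [List.getLast_concat, List.dropLast_concat]

lemma recon_eta (s : SwapT (d+1)) : recon (rho s) (sub s false) (sub s true) = s := by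
  funext x
  simp only [recon]
  by_cases hx : x.val = []
  · rw [dif_pos hx]
    unfold rho
    congr 1
    exact Subtype.ext hx.symm
  · rw [dif_neg hx]
    cases hb : x.val.getLast hx <;>
      · simp only [Bool.cond_false, Bool.cond_true, sub]
        congr 1
        apply Subtype.ext
        simp only []
        rw [← hb]
        exact List.dropLast_append_getLast hx

lemma F_ext_split (s : SwapT (d+1)) (l : List Bool) (hl : l.length ≤ d) (b : Bool) :
    F (ext s) (l ++ [b]) = F (ext (sub s b)) l ++ [xor b (rho s)] := by
  rw [F_concat]
  congr 1
  · apply F_congr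
    intro x hx
    have hxd : x.length < d := lt_of_lt_of_le hx hl
    rw [ext_eq s _ (by simpa using by omega), ext_eq (sub s b) _ hxd]
    rfl

lemma cond_iff (c c' : List Bool → Bool) (s : SwapT (d+1)) :
    (∀ l : List Bool, l.length = d + 1 → c' (F (ext s) l) = c l) ↔
    (∀ b : Bool, ∀ l : List Bool, l.length = d →
      cb c' (xor b (rho s)) (F (ext (sub s b)) l) = cb c b l) := by
  constructor
  · intro h b l hl
    have := h (l ++ [b]) (by simp [hl])
    rw [F_ext_split s l (le_of_eq hl) b] at this
    exact this
  · intro h l hl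
    have hne : l ≠ [] := by rintro rfl; simp at hl
    have hrep : l.dropLast ++ [l.getLast hne] = l := List.dropLast_append_getLast hne
    have hdl : l.dropLast.length = d := by
      have := List.length_dropLast (xs := l)
      omega
    have := h (l.getLast hne) l.dropLast hdl
    rw [← hrep]
    have hsplit := F_ext_split s l.dropLast (le_of_eq hdl) (l.getLast hne)
    rw [hsplit]
    exact this

lemma recon_eta' {s : SwapT (d+1)} {ρ : Bool} (h : rho s = ρ) :
    recon ρ (sub s false) (sub s true) = s := h ▸ recon_eta s

/-- The splitting equivalence. -/
noncomputable def splitEquiv (c c' : List Bool → Bool) :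
    IsoS (d+1) c c' ≃
      (IsoS d (cb c false) (cb c' false) × IsoS d (cb c true) (cb c' true)) ⊕
      (IsoS d (cb c false) (cb c' true) × IsoS d (cb c true) (cb c' false)) where
  toFun s :=
    if hρ : rho s.1 = false then
      Sum.inl (⟨sub s.1 false, by
          have := ((cond_iff c c' s.1).mp s.2) false
          simpa [hρ] using this⟩,
        ⟨sub s.1 true, by
          have := ((cond_iff c c' s.1).mp s.2) true
          simpa [hρ] using this⟩)
    else
      Sum.inr (⟨sub s.1 false, by
          have hρ' : rho s.1 = true := by simpa using hρ
          have := ((cond_iff c c' s.1).mp s.2) false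
          simpa [hρ'] using this⟩,
        ⟨sub s.1 true, by
          have hρ' : rho s.1 = true := by simpa using hρ
          have := ((cond_iff c c' s.1).mp s.2) true
          simpa [hρ'] using this⟩)
  invFun p :=
    match p with
    | Sum.inl (t0, t1) =>
      ⟨recon false t0.1 t1.1, by
        rw [cond_iff]
        intro b l hl
        rw [rho_recon, sub_recon]
        cases b
        · simpa using t0.2 l hl
        · simpa using t1.2 l hl⟩
    | Sum.inr (t0, t1) =>
      ⟨recon true t0.1 t1.1, by
        rw [cond_iff]
        intro b l hl
        rw [rho_recon, sub_recon]
        cases b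
        · simpa using t0.2 l hl
        · simpa using t1.2 l hl⟩
  left_inv s := by
    by_cases hρ : rho s.1 = false
    · simp only [dif_pos hρ]
      exact Subtype.ext (recon_eta' hρ)
    · simp only [dif_neg hρ]
      exact Subtype.ext (recon_eta' (by simpa using hρ))
  right_inv p := by
    match p with
    | Sum.inl (t0, t1) =>
      simp only []
      rw [dif_pos (by simp)]
      congr 1
      refine Prod.ext ?_ ?_ <;> (apply Subtype.ext; simp [sub_recon])
    | Sum.inr (t0, t1) =>
      simp only []
      rw [dif_neg (by simp)]
      congr 1
      refine Prod.ext ?_ ?_ <;> (apply Subtype.ext; simp [sub_recon])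

lemma Bn_succ (c c' : List Bool → Bool) :
    Bn (d+1) c c' =
      Bn d (cb c false) (cb c' false) * Bn d (cb c true) (cb c' true) +
      Bn d (cb c false) (cb c' true) * Bn d (cb c true) (cb c' false) := by
  unfold Bn
  rw [Nat.card_congr (splitEquiv c c'), Nat.card_sum, Nat.card_prod, Nat.card_prod]

lemma nonempty_iso_succ (c c' : List Bool → Bool) :
    Nonempty (IsoS (d+1) c c') ↔
      (Nonempty (IsoS d (cb c false) (cb c' false)) ∧ Nonempty (IsoS d (cb c true) (cb c' true))) ∨
      (Nonempty (IsoS d (cb c false) (cb c' true)) ∧ Nonempty (IsoS d (cb c true) (cb c' false))) := by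
  rw [Equiv.nonempty_congr (splitEquiv c c')]
  simp [nonempty_prod]

end P19

namespace P19

open Classical in
noncomputable def eps (d : ℕ) (c c' : List Bool → Bool) : ℕ :=
  if Nonempty (IsoS d c c') then 2 else 1

lemma eps_pos (d c c') : 1 ≤ eps d c c' := by
  unfold eps; split <;> omega

lemma eps_le (d c c') : eps d c c' ≤ 2 := by
  unfold eps; split <;> omega

lemma eps_of_nonempty {d c c'} (h : Nonempty (IsoS d c c')) : eps d c c' = 2 := if_pos h

lemma eps_of_empty {d c c'} (h : ¬ Nonempty (IsoS d c c')) : eps d c c' = 1 := if_neg h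

lemma A_succ (d : ℕ) (c : List Bool → Bool) :
    A (d+1) c = A d (cb c false) * A d (cb c true) * eps d (cb c false) (cb c true) := by
  have h := Bn_succ (d := d) c c
  have hA : A (d+1) c = Bn (d+1) c c := rfl
  rw [hA, h]
  by_cases hne : Nonempty (IsoS d (cb c false) (cb c true))
  · obtain ⟨t⟩ := hne
    obtain ⟨t'⟩ := iso_symm t
    rw [Bn_eq_A t, Bn_eq_A t', eps_of_nonempty ⟨t⟩]
    show A d (cb c false) * A d (cb c true) + A d (cb c false) * A d (cb c true) = _
    ring
  · rw [Bn_eq_zero hne, eps_of_empty hne]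
    show Bn d (cb c false) (cb c false) * Bn d (cb c true) (cb c true) + 0 * _ = _
    have h1 : Bn d (cb c false) (cb c false) = A d (cb c false) := rfl
    have h2 : Bn d (cb c true) (cb c true) = A d (cb c true) := rfl
    rw [h1, h2]; ring

instance : IsEmpty {l : List Bool // l.length < 0} :=
  ⟨fun x => Nat.not_lt_zero _ x.2⟩

instance : Unique (SwapT 0) := by unfold SwapT; infer_instance

lemma F_ext_zero (s : SwapT 0) (l : List Bool) (hl : l.length = 0) : F (ext s) l = l := by
  rw [List.length_eq_zero_iff.mp hl]; rfl

lemma nonempty_iso_zero (c c' : List Bool → Bool) :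
    Nonempty (IsoS 0 c c') ↔ c' [] = c [] := by
  constructor
  · rintro ⟨s⟩
    have := s.2 [] rfl
    rwa [F_ext_zero] at this
    rfl
  · intro h
    exact ⟨⟨default, fun l hl => by rw [F_ext_zero _ _ hl, List.length_eq_zero_iff.mp hl]; exact h⟩⟩

lemma A_zero (c : List Bool → Bool) : A 0 c = 1 := by
  unfold A
  rw [Nat.card_eq_one_iff_unique]
  constructor
  · constructor
    intro a b
    apply Subtype.ext
    apply Subsingleton.elim
  · exact (nonempty_iso_zero c c).mpr rfl

lemma A_one (c : List Bool → Bool) :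
    A 1 c = if c [false] = c [true] then 2 else 1 := by
  rw [show (1:ℕ) = 0 + 1 from rfl, A_succ, A_zero, A_zero]
  have : Nonempty (IsoS 0 (cb c false) (cb c true)) ↔ c [false] = c [true] := by
    rw [nonempty_iso_zero]
    show c ([] ++ [true]) = c ([] ++ [false]) ↔ _
    simp [eq_comm]
  by_cases h : c [false] = c [true]
  · rw [if_pos h, eps_of_nonempty (this.mpr h)]
  · rw [if_neg h, eps_of_empty (fun hn => h (this.mp hn))]

lemma nonempty_iso_one (c c' : List Bool → Bool) :
    Nonempty (IsoS 1 c c') ↔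
      ((c' [false] = c [false] ∧ c' [true] = c [true]) ∨
       (c' [true] = c [false] ∧ c' [false] = c [true])) := by
  rw [show (1:ℕ) = 0 + 1 from rfl, nonempty_iso_succ]
  rw [nonempty_iso_zero, nonempty_iso_zero, nonempty_iso_zero, nonempty_iso_zero]
  show (c' ([] ++ [false]) = c ([] ++ [false]) ∧ c' ([] ++ [true]) = c ([] ++ [true])) ∨
      (c' ([] ++ [true]) = c ([] ++ [false]) ∧ c' ([] ++ [false]) = c ([] ++ [true])) ↔ _
  simp

lemma pairP : ∀ d : ℕ, 1 ≤ d → ∀ c c' : List Bool → Bool,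
    2 ^ 2 ^ (d - 1) ≤ A d c * A d c' * eps d c c' := by
  intro d
  induction d with
  | zero => omega
  | succ d ih =>
    intro _ c c'
    by_cases hd : 1 ≤ d
    · have h1 := ih hd (cb c false) (cb c true)
      have h2 := ih hd (cb c' false) (cb c' true)
      rw [A_succ, A_succ]
      have he : 1 ≤ eps (d+1) c c' := eps_pos _ _ _
      calc 2 ^ 2 ^ (d + 1 - 1) = 2 ^ 2 ^ (d-1) * 2 ^ 2 ^ (d-1) := by
            rw [← pow_add]
            congr 1
            have hde : d + 1 - 1 = (d - 1) + 1 := by omega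
            rw [hde, pow_succ, mul_two]
        _ ≤ (A d (cb c false) * A d (cb c true) * eps d (cb c false) (cb c true)) *
            (A d (cb c' false) * A d (cb c' true) * eps d (cb c' false) (cb c' true)) :=
            Nat.mul_le_mul h1 h2
        _ ≤ _ := Nat.le_mul_of_pos_right _ he
    · have hd0 : d = 0 := by omega
      subst hd0
      -- base case d = 1
      rw [A_one, A_one]
      have hiso := nonempty_iso_one c c'
      have hgoal : (2:ℕ) ^ 2 ^ (0 + 1 - 1) = 2 := by norm_num
      rw [hgoal]
      have he : 1 ≤ eps 1 c c' := eps_pos 1 c c'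
      by_cases h1 : c [false] = c [true]
      · rw [if_pos h1]
        have ha : 1 ≤ (if c' [false] = c' [true] then 2 else 1 : ℕ) := by split <;> omega
        calc (2:ℕ) = 2 * 1 * 1 := by ring
          _ ≤ _ := Nat.mul_le_mul (Nat.mul_le_mul le_rfl ha) he
      · rw [if_neg h1]
        by_cases h2 : c' [false] = c' [true]
        · rw [if_pos h2]
          calc (2:ℕ) = 1 * 2 * 1 := by ring
            _ ≤ 1 * 2 * eps 1 c c' := Nat.mul_le_mul le_rfl he
        · rw [if_neg h2]
          have hne : Nonempty (IsoS 1 c c') := by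
            rw [hiso]
            revert h1 h2
            cases hcf : c [false] <;> cases hct : c [true] <;>
              cases hcf' : c' [false] <;> cases hct' : c' [true] <;> simp_all
          rw [eps_of_nonempty hne]

lemma lower_bound (c : List Bool → Bool) : 2 ^ 128 ≤ A 9 c := by
  have h := pairP 8 (by norm_num) (cb c false) (cb c true)
  rw [show (9:ℕ) = 8 + 1 from rfl, A_succ]
  have : (2:ℕ) ^ 2 ^ (8 - 1) = 2 ^ 128 := by norm_num
  omega

end P19

namespace P19

def K (b : Bool) : List Bool → Bool := fun _ => b

def glue (c0 c1 : List Bool → Bool) : List Bool → Bool :=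
  fun l => if l.getLastD false then c1 l.dropLast else c0 l.dropLast

lemma cb_glue (c0 c1 : List Bool → Bool) (b : Bool) :
    cb (glue c0 c1) b = bif b then c1 else c0 := by
  funext l
  show glue c0 c1 (l ++ [b]) = _
  unfold glue
  rw [List.getLastD_concat, List.dropLast_concat]
  cases b <;> rfl

lemma A_glue (d : ℕ) (a b : List Bool → Bool) :
    A (d+1) (glue a b) = A d a * A d b * eps d a b := by
  rw [A_succ, cb_glue, cb_glue]
  rfl

lemma N_glue (d : ℕ) (a b a' b' : List Bool → Bool) :
    Nonempty (IsoS (d+1) (glue a b) (glue a' b')) ↔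
      (Nonempty (IsoS d a a') ∧ Nonempty (IsoS d b b')) ∨
      (Nonempty (IsoS d a b') ∧ Nonempty (IsoS d b a')) := by
  rw [nonempty_iso_succ, cb_glue, cb_glue, cb_glue, cb_glue]
  rfl

def P1 : List Bool → Bool := glue (K false) (K true)
def W1 : List Bool → Bool := glue (K false) (K false)
def B1 : List Bool → Bool := glue (K true) (K true)
def X2 : List Bool → Bool := glue P1 W1
def Y2 : List Bool → Bool := glue P1 B1
def Z2 : List Bool → Bool := glue P1 P1

lemma A1_P1 : A 1 P1 = 1 := by
  rw [A_one, if_neg (by decide)]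
lemma A1_W1 : A 1 W1 = 2 := by
  rw [A_one, if_pos (by decide)]
lemma A1_B1 : A 1 B1 = 2 := by
  rw [A_one, if_pos (by decide)]

lemma N1_P1_W1 : ¬ Nonempty (IsoS 1 P1 W1) := by
  rw [nonempty_iso_one]; decide
lemma N1_P1_B1 : ¬ Nonempty (IsoS 1 P1 B1) := by
  rw [nonempty_iso_one]; decide
lemma N1_W1_P1 : ¬ Nonempty (IsoS 1 W1 P1) := by
  rw [nonempty_iso_one]; decide
lemma N1_B1_P1 : ¬ Nonempty (IsoS 1 B1 P1) := by
  rw [nonempty_iso_one]; decide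
lemma N1_W1_B1 : ¬ Nonempty (IsoS 1 W1 B1) := by
  rw [nonempty_iso_one]; decide
lemma N1_B1_W1 : ¬ Nonempty (IsoS 1 B1 W1) := by
  rw [nonempty_iso_one]; decide
lemma N1_P1_P1 : Nonempty (IsoS 1 P1 P1) := iso_refl P1

lemma A2_X2 : A 2 X2 = 2 := by
  show A (1+1) (glue P1 W1) = 2
  rw [A_glue, A1_P1, A1_W1, eps_of_empty N1_P1_W1]
lemma A2_Y2 : A 2 Y2 = 2 := by
  show A (1+1) (glue P1 B1) = 2
  rw [A_glue, A1_P1, A1_B1, eps_of_empty N1_P1_B1]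
lemma A2_Z2 : A 2 Z2 = 2 := by
  show A (1+1) (glue P1 P1) = 2
  rw [A_glue, A1_P1, eps_of_nonempty N1_P1_P1]

lemma N2_X2_Y2 : ¬ Nonempty (IsoS 2 X2 Y2) := by
  show ¬ Nonempty (IsoS (1+1) (glue P1 W1) (glue P1 B1))
  rw [N_glue]
  rintro (⟨_, h⟩ | ⟨h, _⟩)
  · exact N1_W1_B1 h
  · exact N1_P1_B1 h
lemma N2_X2_Z2 : ¬ Nonempty (IsoS 2 X2 Z2) := by
  show ¬ Nonempty (IsoS (1+1) (glue P1 W1) (glue P1 P1))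
  rw [N_glue]
  rintro (⟨_, h⟩ | ⟨_, h⟩)
  · exact N1_W1_P1 h
  · exact N1_W1_P1 h
lemma N2_Y2_Z2 : ¬ Nonempty (IsoS 2 Y2 Z2) := by
  show ¬ Nonempty (IsoS (1+1) (glue P1 B1) (glue P1 P1))
  rw [N_glue]
  rintro (⟨_, h⟩ | ⟨_, h⟩)
  · exact N1_B1_P1 h
  · exact N1_B1_P1 h

/-- The tower of minimal colorings: `trip n` lives at depth `n + 2`. -/
def trip : ℕ → (List Bool → Bool) × (List Bool → Bool) × (List Bool → Bool)
  | 0 => (X2, Y2, Z2)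
  | n+1 => (glue (trip n).1 (trip n).2.1, glue (trip n).1 (trip n).2.2,
            glue (trip n).2.1 (trip n).2.2)

lemma trip_inv (n : ℕ) :
    A (n+2) (trip n).1 = 2 ^ 2 ^ n ∧ A (n+2) (trip n).2.1 = 2 ^ 2 ^ n ∧
    A (n+2) (trip n).2.2 = 2 ^ 2 ^ n ∧
    ¬ Nonempty (IsoS (n+2) (trip n).1 (trip n).2.1) ∧
    ¬ Nonempty (IsoS (n+2) (trip n).1 (trip n).2.2) ∧
    ¬ Nonempty (IsoS (n+2) (trip n).2.1 (trip n).2.2) := by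
  induction n with
  | zero =>
    exact ⟨A2_X2, A2_Y2, A2_Z2, N2_X2_Y2, N2_X2_Z2, N2_Y2_Z2⟩
  | succ n ih =>
    obtain ⟨ha, hb, hz, nab, naz, nbz⟩ := ih
    have htrip : trip (n+1) = (glue (trip n).1 (trip n).2.1, glue (trip n).1 (trip n).2.2,
        glue (trip n).2.1 (trip n).2.2) := rfl
    set a := (trip n).1 with hsa
    set b := (trip n).2.1 with hsb
    set z := (trip n).2.2 with hsz
    have hpow : (2:ℕ) ^ 2 ^ n * 2 ^ 2 ^ n = 2 ^ 2 ^ (n+1) := by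
      rw [← pow_add, pow_succ, mul_two]
    rw [htrip]
    refine ⟨?_, ?_, ?_, ?_, ?_, ?_⟩
    · show A (n+2+1) (glue a b) = _
      rw [A_glue, ha, hb, eps_of_empty nab, mul_one, hpow]
    · show A (n+2+1) (glue a z) = _
      rw [A_glue, ha, hz, eps_of_empty naz, mul_one, hpow]
    · show A (n+2+1) (glue b z) = _
      rw [A_glue, hb, hz, eps_of_empty nbz, mul_one, hpow]
    · show ¬ Nonempty (IsoS (n+2+1) (glue a b) (glue a z))
      rw [N_glue]
      rintro (⟨_, h⟩ | ⟨h, _⟩)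
      · exact nbz h
      · exact naz h
    · show ¬ Nonempty (IsoS (n+2+1) (glue a b) (glue b z))
      rw [N_glue]
      rintro (⟨h, _⟩ | ⟨h, _⟩)
      · exact nab h
      · exact naz h
    · show ¬ Nonempty (IsoS (n+2+1) (glue a z) (glue b z))
      rw [N_glue]
      rintro (⟨h, _⟩ | ⟨h, _⟩)
      · exact nab h
      · exact naz h

/-- An explicit coloring of the depth-9 tree with exactly `2^128` automorphisms. -/
def cMin : List Bool → Bool := (trip 7).1

lemma A_cMin : A 9 cMin = 2 ^ 128 := by
  have h := (trip_inv 7).1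
  show A (7+2) (trip 7).1 = 2 ^ 128
  rw [h]
  norm_num

end P19

namespace P19

def root : TVert 10 := ⟨[], by norm_num⟩

noncomputable def permOf (u : List Bool → Bool) : Equiv.Perm (TVert 10) where
  toFun x := ⟨F u x.val, by rw [F_length]; exact x.2⟩
  invFun x := ⟨G u x.val, by rw [G_length]; exact x.2⟩
  left_inv x := Subtype.ext (G_F u x.val)
  right_inv x := Subtype.ext (F_G u x.val)

lemma permOf_val (u : List Bool → Bool) (x : TVert 10) :
    (permOf u x).val = F u x.val := rfl

lemma adj_permOf (u : List Bool → Bool) {x y : TVert 10} (h : TAdj 10 x y) :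
    TAdj 10 (permOf u x) (permOf u y) := by
  rcases h with ⟨b, hb⟩ | ⟨b, hb⟩
  · exact Or.inl ⟨xor b (u x.val), by rw [permOf_val, permOf_val, hb]; rfl⟩
  · exact Or.inr ⟨xor b (u y.val), by rw [permOf_val, permOf_val, hb]; rfl⟩

lemma adj_permOf_iff (u : List Bool → Bool) (x y : TVert 10) :
    TAdj 10 x y ↔ TAdj 10 (permOf u x) (permOf u y) := by
  constructor
  · exact adj_permOf u
  · intro h
    have h2 := adj_permOf (fun z => u (G u z)) h
    have key : ∀ z : TVert 10, permOf (fun z => u (G u z)) (permOf u z) = z := by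
      intro z
      apply Subtype.ext
      rw [permOf_val, permOf_val, ← G_eq_F, G_F]
    rwa [key, key] at h2

section Structure

variable (f : Equiv.Perm (TVert 10))
variable (hf : ∀ x y : TVert 10, TAdj 10 x y ↔ TAdj 10 (f x) (f y))

def Two (x : TVert 10) : Prop := ∃ y z, y ≠ z ∧ TAdj 10 x y ∧ TAdj 10 x z

def Three (x : TVert 10) : Prop :=
  ∃ y z w, y ≠ z ∧ y ≠ w ∧ z ≠ w ∧ TAdj 10 x y ∧ TAdj 10 x z ∧ TAdj 10 x w

lemma leaf_nbr {x y : TVert 10} (hx : x.val.length = 9) (h : TAdj 10 x y) :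
    y.val = x.val.tail := by
  rcases h with ⟨b, hb⟩ | ⟨b, hb⟩
  · exfalso
    have := y.2
    rw [hb] at this
    simp [hx] at this
  · simp [hb]

lemma root_nbr {y : TVert 10} (h : TAdj 10 root y) :
    y.val = [false] ∨ y.val = [true] := by
  rcases h with ⟨b, hb⟩ | ⟨b, hb⟩
  · cases b
    · exact Or.inl hb
    · exact Or.inr hb
  · exact absurd hb (by simp [root])

lemma Two_root : Two root := by
  refine ⟨⟨[false], by norm_num⟩, ⟨[true], by norm_num⟩, ?_, ?_, ?_⟩
  · intro h
    have := congrArg Subtype.val h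
    simp at this
  · exact Or.inl ⟨false, rfl⟩
  · exact Or.inl ⟨true, rfl⟩

lemma notThree_root : ¬ Three root := by
  rintro ⟨y, z, w, hyz, hyw, hzw, hy, hz, hw⟩
  rcases root_nbr hy with h1 | h1 <;> rcases root_nbr hz with h2 | h2 <;>
    rcases root_nbr hw with h3 | h3 <;>
    first
      | exact hyz (Subtype.ext (h1.trans h2.symm))
      | exact hyw (Subtype.ext (h1.trans h3.symm))
      | exact hzw (Subtype.ext (h2.trans h3.symm))

lemma root_unique (x : TVert 10) (h2 : Two x) (h3 : ¬ Three x) : x = root := by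
  rcases Nat.lt_or_ge x.val.length 1 with hl | hl
  · apply Subtype.ext
    have : x.val.length = 0 := by omega
    simpa [root] using List.length_eq_zero_iff.mp this
  rcases Nat.lt_or_ge x.val.length 9 with hm | hm
  · -- internal vertex: has three distinct neighbors
    exfalso
    apply h3
    have hne : x.val ≠ [] := by
      intro h
      rw [h] at hl
      simp at hl
    refine ⟨⟨x.val.tail, ?_⟩, ⟨false :: x.val, ?_⟩, ⟨true :: x.val, ?_⟩, ?_, ?_, ?_, ?_, ?_, ?_⟩
    · have := x.2; have := List.length_tail (l := x.val); omega
    · simp; omega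
    · simp; omega
    · intro h
      have := congrArg (fun v => v.val.length) h
      simp only [List.length_tail, List.length_cons] at this
      omega
    · intro h
      have := congrArg (fun v => v.val.length) h
      simp only [List.length_tail, List.length_cons] at this
      omega
    · intro h
      have := congrArg Subtype.val h
      simp at this
    · exact Or.inr ⟨x.val.head hne, (List.cons_head_tail hne).symm⟩
    · exact Or.inl ⟨false, rfl⟩
    · exact Or.inl ⟨true, rfl⟩
  · -- leaf: all neighbors coincide
    exfalso
    obtain ⟨y, z, hyz, hy, hz⟩ := h2
    have hx9 : x.val.length = 9 := by have := x.2; omega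
    exact hyz (Subtype.ext ((leaf_nbr hx9 hy).trans (leaf_nbr hx9 hz).symm))

include hf in
lemma Two_map {x : TVert 10} (h : Two x) : Two (f x) := by
  obtain ⟨y, z, hyz, hy, hz⟩ := h
  exact ⟨f y, f z, fun h => hyz (f.injective h), (hf _ _).mp hy, (hf _ _).mp hz⟩

include hf in
lemma Three_map {x : TVert 10} (h : Three x) : Three (f x) := by
  obtain ⟨y, z, w, hyz, hyw, hzw, hy, hz, hw⟩ := h
  exact ⟨f y, f z, f w, fun h => hyz (f.injective h), fun h => hyw (f.injective h),
    fun h => hzw (f.injective h), (hf _ _).mp hy, (hf _ _).mp hz, (hf _ _).mp hw⟩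

include hf in
lemma hf_symm : ∀ x y : TVert 10, TAdj 10 x y ↔ TAdj 10 (f.symm x) (f.symm y) := by
  intro x y
  rw [hf (f.symm x) (f.symm y), f.apply_symm_apply, f.apply_symm_apply]

include hf in
lemma root_fixed : f root = root := by
  apply root_unique
  · exact Two_map f hf Two_root
  · intro h3
    have := Three_map f.symm (hf_symm f hf) h3
    rw [f.symm_apply_apply] at this
    exact notThree_root this

include hf in
lemma level_map : ∀ n : ℕ, ∀ x : TVert 10, x.val.length = n → (f x).val.length = n := by
  intro n
  induction n using Nat.strong_induction_on with
  | _ n ih =>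
    intro x hx
    match n, hx with
    | 0, hx =>
      have hx0 : x = root := Subtype.ext (by simpa [root] using List.length_eq_zero_iff.mp hx)
      rw [hx0, root_fixed f hf]
      rfl
    | Nat.succ m, hx =>
      have hne : x.val ≠ [] := by
        intro h
        rw [h] at hx
        simp at hx
      set p : TVert 10 := ⟨x.val.tail, by have := x.2; have := List.length_tail (l := x.val); omega⟩
        with hp
      have hadj : TAdj 10 x p := Or.inr ⟨x.val.head hne, (List.cons_head_tail hne).symm⟩
      have himg : TAdj 10 (f x) (f p) := (hf _ _).mp hadj
      have hplen : p.val.length = m := by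
        simp only [hp, List.length_tail]
        omega
      have hfp : (f p).val.length = m := ih m (by omega) p hplen
      rcases himg with ⟨b, hb⟩ | ⟨b, hb⟩
      · -- bad case : f p is a child of f x
        exfalso
        match m, hplen, hfp with
        | 0, hplen, hfp =>
          have hproot : p = root := Subtype.ext (by simpa [root] using List.length_eq_zero_iff.mp hplen)
          rw [hproot, root_fixed f hf] at hb
          exact absurd hb (by simp [root])
        | Nat.succ k, hplen, hfp =>
          have hpne : p.val ≠ [] := by
            intro h
            rw [h] at hplen
            simp at hplen
          set q : TVert 10 := ⟨p.val.tail, by have := p.2; have := List.length_tail (l := p.val); omega⟩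
            with hq
          have hadj2 : TAdj 10 p q := Or.inr ⟨p.val.head hpne, (List.cons_head_tail hpne).symm⟩
          have himg2 : TAdj 10 (f p) (f q) := (hf _ _).mp hadj2
          have hqlen : q.val.length = k := by
            simp only [hq, List.length_tail]
            omega
          have hfq : (f q).val.length = k := ih k (by omega) q hqlen
          rcases himg2 with ⟨e, he⟩ | ⟨e, he⟩
          · -- f q is child of f p : impossible lengths
            have := congrArg List.length he
            simp [hfq] at this
            omega
          · -- f p = e :: f q  and  f p = b :: f x  ⇒  f x = f q
            rw [hb] at he
            have htails : (f x).val = (f q).val := by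
              have := congrArg List.tail he
              simpa using this
            have : x = q := f.injective (Subtype.ext htails)
            have := congrArg (fun v => v.val.length) this
            simp only [hx, hqlen] at this
            omega
      · rw [hb]
        simp [hfp]

include hf in
lemma child_form (m : List Bool) (hm : m.length ≤ 8) (b : Bool) :
    ∃ b', (f ⟨b :: m, by simp; omega⟩).val = b' :: (f ⟨m, by omega⟩).val := by
  have hadj : TAdj 10 (⟨b :: m, by simp; omega⟩ : TVert 10) ⟨m, by omega⟩ :=
    Or.inr ⟨b, rfl⟩
  have himg := (hf _ _).mp hadj
  rcases himg with ⟨b', hb'⟩ | ⟨b', hb'⟩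
  · -- bad : f m = b' :: f (b :: m), wrong lengths
    exfalso
    have h1 := level_map f hf (m.length + 1) ⟨b :: m, by simp; omega⟩ (by simp)
    have h2 := level_map f hf m.length ⟨m, by omega⟩ rfl
    have := congrArg List.length hb'
    simp [h1, h2] at this
    omega
  · exact ⟨b', hb'⟩

def sOf : SwapT 9 :=
  fun v => (f ⟨false :: v.val, by have := v.2; simp; omega⟩).val.headI

include hf in
lemma apply_eq : ∀ (l : List Bool) (hl : l.length < 10), (f ⟨l, hl⟩).val = F (ext (sOf f)) l := by
  intro l
  induction l with
  | nil =>
    intro hl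
    have : (⟨[], hl⟩ : TVert 10) = root := rfl
    rw [this, root_fixed f hf]
    rfl
  | cons b m ih =>
    intro hl
    have hm8 : m.length ≤ 8 := by simp at hl; omega
    have hm9 : m.length < 9 := by omega
    obtain ⟨b', hb'⟩ := child_form f hf m hm8 b
    obtain ⟨b0, hb0⟩ := child_form f hf m hm8 false
    obtain ⟨b1, hb1⟩ := child_form f hf m hm8 true
    have hext : ext (sOf f) m = b0 := by
      rw [ext_eq _ _ hm9]
      show (f ⟨false :: m, _⟩).val.headI = b0
      rw [hb0]
      rfl
    have hne : b0 ≠ b1 := by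
      intro h
      have : f ⟨false :: m, by simp; omega⟩ = f ⟨true :: m, by simp; omega⟩ := by
        apply Subtype.ext
        rw [hb0, hb1, h]
      have := f.injective this
      have := congrArg Subtype.val this
      simp at this
    show (f ⟨b :: m, hl⟩).val = (xor b (ext (sOf f) m)) :: F (ext (sOf f)) m
    rw [← ih (by omega), hext]
    cases b
    · rw [show (xor false b0) = b0 by simp]
      exact hb0
    · have : b1 = xor true b0 := by
        revert hne
        cases b0 <;> cases b1 <;> simp
      rw [← this]
      exact hb1

include hf in
lemma exists_swap : ∃ s : SwapT 9, ∀ x : TVert 10, (f x).val = F (ext s) x.val := by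
  refine ⟨sOf f, fun x => ?_⟩
  have := apply_eq f hf x.val x.2
  exact this

end Structure

noncomputable def toAut (c : List Bool → Bool) (s : IsoS 9 c c) : ↥(ColorAuts 10 c) :=
  ⟨permOf (ext s.1), by
    refine ⟨adj_permOf_iff (ext s.1), fun x hx => ?_⟩
    rw [permOf_val]
    exact s.2 x.val hx⟩

lemma toAut_bijective (c : List Bool → Bool) : Function.Bijective (toAut c) := by
  constructor
  · intro s t h
    apply Subtype.ext
    apply swap_ext_of_F
    intro l hl
    have h1 := congrArg Subtype.val h
    simp only [toAut] at h1
    have h2 : permOf (ext s.1) = permOf (ext t.1) := h1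
    have h3 := congrArg Subtype.val (DFunLike.congr_fun h2 (⟨l, by omega⟩ : TVert 10))
    exact h3
  · rintro ⟨g, hadj, hcol⟩
    obtain ⟨s, hs⟩ := exists_swap g hadj
    refine ⟨⟨s, fun l hl => ?_⟩, ?_⟩
    · rw [← hs ⟨l, by omega⟩]
      exact hcol ⟨l, by omega⟩ hl
    · apply Subtype.ext
      show permOf (ext s) = g
      apply Equiv.ext
      intro x
      exact Subtype.ext (hs x).symm

lemma card_colorAuts (c : List Bool → Bool) : Nat.card (ColorAuts 10 c) = A 9 c :=
  (Nat.card_congr (Equiv.ofBijective (toAut c) (toAut_bijective c))).symm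

end P19

theorem stmt_19 :
    IsGreatest {M : ℕ | ∀ c : List Bool → Bool, M ≤ Nat.card (ColorAuts 10 c)}
      (2 ^ 128) := by
  constructor
  · intro c
    rw [P19.card_colorAuts c]
    exact P19.lower_bound c
  · intro M hM
    have h := hM P19.cMin
    rwa [P19.card_colorAuts, P19.A_cMin] at h
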